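/- arXiv:1312.5042 — 4 statements merged into one kernel-verified Lean document; each statement's English description precedes it below -/
import Mathlib

section
/- For every x ∈ ℝ, cot(πx) = 1/(πx) + (2x/π) ∑_{i=1}^∞ 1/(x² - i²), where x is not an integer. -/
open Real Filter

section aux
open Complex intervalIntegral


lemma exp_int (a : ℝ) (ha : a ≠ 0) :
    (∫ t in (-π)..π, Complex.exp (Complex.I * a * t)) = 2 * Real.sin (a * π) / a := by
  rw [integral_exp_mul_complex (by simp [Complex.I_ne_zero, ha] : Complex.I * (a:ℂ) ≠ 0)]
  rw [Complex.ofReal_sin, Complex.sin, Complex.ofReal_neg]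
  have h2 : (a:ℂ) ≠ 0 := by exact_mod_cast ha
  field_simp
  ring_nf
  simp only [Complex.I_sq]
  field_simp
  push_cast; ring

instance : Fact (0 < 2*π) := ⟨by positivity⟩

lemma four_coeff (x : ℝ) (hx : ∀ n : ℤ, x ≠ n) (n : ℤ) :
    fourierCoeff (AddCircle.liftIco (2*π) (-π) (fun t => Complex.cos (x*t))) n
      = ((Real.sin (π*x) * x / π : ℝ) : ℂ) * (-1:ℂ)^n * (1/((x:ℂ)^2 - (n:ℂ)^2)) := by
  have hxn : x - n ≠ 0 := sub_ne_zero.mpr (hx n)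
  have hxn' : x + n ≠ 0 := by
    intro h; exact hx (-n) (by push_cast; linarith)
  have hπ : (π : ℂ) ≠ 0 := by exact_mod_cast Real.pi_ne_zero
  rw [fourierCoeff_liftIco_eq, fourierCoeffOn_eq_integral]
  have key : ∀ t : ℝ, (fourier (-n) (t : AddCircle ((-π + 2*π) - (-π)))) • Complex.cos (x*t)
      = (1/2 : ℂ) * (Complex.exp (Complex.I * ((x - n : ℝ)) * t)
        + Complex.exp (Complex.I * ((-(x + n) : ℝ)) * t)) := by
    intro t
    rw [fourier_coe_apply, Complex.cos, smul_eq_mul,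
      show (-π + 2*π - -π : ℝ) = 2*π by ring]
    have hD : Complex.I * ((x - (n:ℝ) : ℝ):ℂ) * (t:ℂ)
        = 2*(π:ℂ)*Complex.I*((-n : ℤ):ℂ)*(t:ℂ)/((2*π : ℝ):ℂ) + (x:ℂ)*(t:ℂ)*Complex.I := by
      push_cast; field_simp; ring
    have hE : Complex.I * ((-(x + (n:ℝ)) : ℝ):ℂ) * (t:ℂ)
        = 2*(π:ℂ)*Complex.I*((-n : ℤ):ℂ)*(t:ℂ)/((2*π : ℝ):ℂ) + -((x:ℂ)*(t:ℂ))*Complex.I := by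
      push_cast; field_simp; ring
    rw [hD, hE, Complex.exp_add, Complex.exp_add]
    ring
  rw [intervalIntegral.integral_congr (fun t _ => key t),
    show (-π + 2*π : ℝ) = π by ring]
  rw [intervalIntegral.integral_const_mul, intervalIntegral.integral_add
    ((Continuous.intervalIntegrable (by continuity) _ _))
    ((Continuous.intervalIntegrable (by continuity) _ _)),
    exp_int _ hxn, exp_int _ (neg_ne_zero.mpr hxn')]
  have hmc : x * π = π * x := mul_comm _ _
  have h1 : Real.sin ((x - n) * π) = (-1:ℝ)^n * Real.sin (π * x) := by
    rw [sub_mul, ← neg_sub ((n:ℝ)*π), Real.sin_neg, Real.sin_int_mul_pi_sub, hmc]; ring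
  have h2 : Real.sin (-(x + n) * π) = -((-1:ℝ)^n * Real.sin (π * x)) := by
    have h3 := Real.sin_int_mul_pi_sub (-(π*x)) n
    rw [Real.sin_neg] at h3
    rw [show (-(x + n) * π : ℝ) = -(π*x + n*π) by ring, Real.sin_neg,
      show (π*x + (n:ℝ)*π) = (n:ℝ)*π - -(π*x) by ring, h3]
    ring
  rw [h1, h2]
  have hxc : (x:ℂ) - (n:ℂ) ≠ 0 := by exact_mod_cast hxn
  have hxc' : (x:ℂ) + (n:ℂ) ≠ 0 := by exact_mod_cast hxn'
  have hsq : ((x:ℂ)^2 - (n:ℂ)^2) ≠ 0 := by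
    rw [show ((x:ℂ)^2 - (n:ℂ)^2) = ((x:ℂ)-n)*((x:ℂ)+n) by ring]
    exact mul_ne_zero hxc hxc'
  have hpow : (((-1:ℝ)^n : ℝ) : ℂ) = (-1:ℂ)^n := by push_cast; ring
  have hneg : -(x:ℂ) - (n:ℂ) ≠ 0 := by
    rw [show (-(x:ℂ) - n) = -((x:ℂ)+n) by ring]; exact neg_ne_zero.mpr hxc'
  rw [show (π - -π : ℝ) = 2*π by ring, real_smul]
  push_cast
  rw [show (2 * -((-1:ℂ)^n * Complex.sin ((π:ℂ) * (x:ℂ)))) = -(2*((-1:ℂ)^n * Complex.sin ((π:ℂ)*(x:ℂ)))) by ring,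
    neg_div_neg_eq, div_add_div _ _ hxc hxc']
  have hprod : ((x:ℂ)-n)*((x:ℂ)+n) ≠ 0 := mul_ne_zero hxc hxc'
  field_simp
  ring

lemma summable_g (x : ℝ) : Summable (fun n : ℤ => 1/(x^2 - (n:ℝ)^2)) := by
  have h2 : Summable (fun n : ℤ => 2 * (1/(n:ℝ)^2)) :=
    (summable_one_div_int_pow.mpr one_lt_two).mul_left 2
  apply Summable.of_norm_bounded_eventually h2
  have hfin : ∀ᶠ n : ℤ in Filter.cofinite, 2*x^2 + 1 ≤ (n:ℝ)^2 := by
    have : ∀ᶠ n : ℤ in Filter.cofinite, (Real.sqrt (2*x^2+1)) ≤ |(n:ℝ)| := by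
      rw [Int.cofinite_eq]
      rw [Filter.eventually_sup]
      constructor
      · filter_upwards [Filter.eventually_le_atBot (-⌈Real.sqrt (2*x^2+1)⌉ : ℤ)] with n hn
        have : (n:ℝ) ≤ -Real.sqrt (2*x^2+1) := by
          calc (n:ℝ) ≤ (-⌈Real.sqrt (2*x^2+1)⌉ : ℤ) := by exact_mod_cast hn
          _ ≤ -Real.sqrt (2*x^2+1) := by push_cast; simp [Int.le_ceil]
        rw [abs_of_nonpos (by nlinarith [Real.sqrt_nonneg (2*x^2+1)])]
        linarith
      · filter_upwards [Filter.eventually_ge_atTop (⌈Real.sqrt (2*x^2+1)⌉ : ℤ)] with n hn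
        have : Real.sqrt (2*x^2+1) ≤ (n:ℝ) := by
          calc Real.sqrt (2*x^2+1) ≤ (⌈Real.sqrt (2*x^2+1)⌉ : ℤ) := Int.le_ceil _
          _ ≤ (n:ℝ) := by exact_mod_cast hn
        rw [_root_.abs_of_nonneg (le_trans (Real.sqrt_nonneg _) this)]
        exact this
    filter_upwards [this] with n hn
    have h0 : (0:ℝ) ≤ 2*x^2+1 := by positivity
    calc 2*x^2+1 = Real.sqrt (2*x^2+1)^2 := (Real.sq_sqrt h0).symm
    _ ≤ |(n:ℝ)|^2 := by apply pow_le_pow_left₀ (Real.sqrt_nonneg _) hn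
    _ = (n:ℝ)^2 := sq_abs _
  filter_upwards [hfin] with n hn
  have hpos : 0 < (n:ℝ)^2 - x^2 := by nlinarith
  rw [Real.norm_eq_abs, abs_one_div, _root_.abs_of_neg (by linarith : x^2 - (n:ℝ)^2 < 0), neg_sub]
  rw [one_div, one_div, ← div_eq_mul_inv 2, inv_le_iff_one_le_mul₀ hpos, div_mul_eq_mul_div, le_div_iff₀ (by nlinarith : (0:ℝ) < (n:ℝ)^2)]
  nlinarith

lemma hassum_int (x : ℝ) (hx : ∀ n : ℤ, x ≠ n) :
    HasSum (fun n : ℤ => Real.sin (π*x) * x / π * (1/(x^2 - (n:ℝ)^2))) (Real.cos (π*x)) := by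
  have hcont : Continuous (AddCircle.liftIco (2*π) (-π) (fun t => Complex.cos (x*t))) := by
    apply AddCircle.liftIco_continuous
    · show Complex.cos ((x:ℂ) * ((-π : ℝ):ℂ)) = Complex.cos ((x:ℂ) * ((-π + 2*π : ℝ):ℂ))
      rw [show ((-π + 2*π : ℝ)) = π by ring]
      push_cast
      rw [show ((x:ℂ) * -(π:ℂ)) = -((x:ℂ) * (π:ℂ)) by ring, Complex.cos_neg]
    · exact (Continuous.comp Complex.continuous_cos (by continuity)).continuousOn
  set F : C(AddCircle (2*π), ℂ) := ⟨_, hcont⟩ with hF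
  have hc : ∀ n : ℤ, fourierCoeff (⇑F) n
      = ((Real.sin (π*x) * x / π : ℝ) : ℂ) * (-1:ℂ)^n * (1/((x:ℂ)^2 - (n:ℂ)^2)) :=
    four_coeff x hx
  have hsq : ∀ n : ℤ, ((x:ℂ)^2 - (n:ℂ)^2) = ((x^2 - (n:ℝ)^2 : ℝ) : ℂ) := by
    intro n; push_cast; ring
  have hsummable : Summable (fourierCoeff (⇑F)) := by
    apply Summable.of_norm
    apply Summable.congr (((summable_g x).abs).mul_left ‖((Real.sin (π*x) * x / π : ℝ) : ℂ)‖)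
    intro n
    rw [hc n, norm_mul, norm_mul]
    have h1 : ‖((-1:ℂ))^n‖ = 1 := by rw [norm_zpow]; norm_num
    rw [h1, mul_one]
    congr 1
    rw [hsq n, show (1/((x^2 - (n:ℝ)^2 :ℝ):ℂ)) = ((1/(x^2 - (n:ℝ)^2) : ℝ) : ℂ) by push_cast; ring,
      Complex.norm_real, Real.norm_eq_abs]
  have hpt := has_pointwise_sum_fourier_series_of_summable hsummable ((-π : ℝ) : AddCircle (2*π))
  have hFval : F ((-π : ℝ) : AddCircle (2*π)) = ((Real.cos (π*x) : ℝ) : ℂ) := by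
    show AddCircle.liftIco (2*π) (-π) (fun t => Complex.cos (x*t)) _ = _
    rw [AddCircle.liftIco_coe_apply (by constructor <;> [simp; nlinarith [Real.pi_pos]])]
    push_cast
    rw [show ((x:ℂ) * -(π:ℂ)) = -((π:ℂ)*(x:ℂ)) by ring, Complex.cos_neg]
  have hval : ∀ n : ℤ, fourierCoeff (⇑F) n • fourier n ((-π : ℝ) : AddCircle (2*π))
      = ((Real.sin (π*x) * x / π * (1/(x^2 - (n:ℝ)^2)) : ℝ) : ℂ) := by
    intro n
    rw [hc n, smul_eq_mul, fourier_coe_apply]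
    have hπ : (π:ℂ) ≠ 0 := by exact_mod_cast Real.pi_ne_zero
    have : (2 * (π:ℂ) * Complex.I * n * (-π:ℝ) / ((2*π : ℝ):ℂ)) = (-n : ℤ) * ((π:ℂ) * Complex.I) := by
      push_cast; field_simp
    rw [this, Complex.exp_int_mul]
    have hm : ((-1:ℂ))^n * (Complex.exp ((π:ℂ) * Complex.I))^(-n : ℤ) = 1 := by
      rw [show Complex.exp ((π:ℂ) * Complex.I) = -1 by rw [Complex.exp_pi_mul_I]]
      rw [← zpow_add₀ (by norm_num : (-1:ℂ) ≠ 0)]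
      simp
    push_cast
    linear_combination (Complex.sin ((π:ℂ)*(x:ℂ)) * (x:ℂ) / (π:ℂ)) * (1/((x:ℂ)^2 - (n:ℂ)^2)) * hm
  rw [hFval] at hpt
  simp only [hval] at hpt
  have := hpt.mapL Complex.reCLM
  simpa only [Complex.reCLM_apply, Complex.ofReal_re] using this

end aux

/-- Partial fraction expansion of the cotangent:
for every non-integer real `x`,
`cot(πx) = 1/(πx) + (2x/π) ∑_{i=1}^∞ 1/(x² - i²)`. -/
theorem stmt1 (x : ℝ) (hx : ∀ n : ℤ, x ≠ (n : ℝ)) :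
    Real.cot (Real.pi * x) =
      1 / (Real.pi * x) +
        (2 * x / Real.pi) * ∑' i : ℕ, 1 / (x ^ 2 - ((i : ℝ) + 1) ^ 2) := by
  have hx0 : x ≠ 0 := by simpa using hx 0
  have hπ : (π : ℝ) ≠ 0 := Real.pi_ne_zero
  have hsin : Real.sin (π * x) ≠ 0 := by
    intro h
    rcases Real.sin_eq_zero_iff.mp h with ⟨n, hn⟩
    have : π * x = π * n := by rw [← hn]; ring
    exact hx n (mul_left_cancel₀ hπ this)
  set c := Real.sin (π * x) * x / π with hcdef
  have hc0 : c ≠ 0 := div_ne_zero (mul_ne_zero hsin hx0) hπ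
  have h := hassum_int x hx
  have hnat := h.nat_add_neg
  have hfun : ∀ n : ℕ, 2*(c*(1/(x^2-(n:ℝ)^2)))
      = c * (1/(x^2-((n:ℤ):ℝ)^2)) + c * (1/(x^2-(((-(n:ℤ)):ℤ):ℝ)^2)) := by
    intro n; push_cast; ring
  have hnat' := hnat.congr_fun hfun
  norm_num at hnat'
  have hshift := (hasSum_nat_add_iff' 1).mpr hnat'
  norm_num [Finset.sum_range_one] at hshift
  have h2c : (2*c) ≠ 0 := by simp [hc0]
  have hfun2 : ∀ i : ℕ, 1/(x^2 - ((i:ℝ)+1)^2) = 2 * (c * (x^2 - ((i:ℝ)+1)^2)⁻¹) / (2*c) := by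
    intro i
    rw [show 2 * (c * (x^2 - ((i:ℝ)+1)^2)⁻¹) = (2*c) * (x^2 - ((i:ℝ)+1)^2)⁻¹ by ring,
      mul_comm, mul_div_assoc, div_self h2c, mul_one, one_div]
  have ht := (hshift.div_const (2*c)).congr_fun hfun2
  rw [ht.tsum_eq, Real.cot_eq_cos_div_sin, hcdef]
  field_simp
  ring
end

section
/- Let ρ : ℝ → [0,∞) satisfy ρ(z)=ρ(-z), ρ(z)=0 for |z|≤1, and ∫_{|z|>1}|z|^δ ρ(z)dz < ∞ for some δ ∈ (0,1]. Let φ satisfy |φ(x)-φ(y)| ≤ C|x-y|^δ for |x-y| ≥ 1, and let f be bounded measurable with compact support. Then ∫∫_{|x-y|>1} |f(x)-f(y)| |φ(x)-φ(y)| ρ(x-y) dx dy < ∞ and -∫ f(x) Aφ(x) dx = (1/2) ∫∫_{|x-y|>1} (f(x)-f(y))(φ(x)-φ(y)) ρ(x-y) dx dy, where Aφ(x) = ∫_{|z|>1}(φ(x+z)-φ(x))ρ(z)dz. -/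
open Real MeasureTheory Set

/-- Integration by parts formula for the nonlocal operator
`Aφ(x) = ∫_{|z|>1} (φ(x+z) - φ(x)) ρ(z) dz` with truncated symmetric kernel `ρ`:
for `f` bounded measurable with compact support,
`∫∫_{|x-y|>1} |f(x)-f(y)||φ(x)-φ(y)| ρ(x-y) dx dy < ∞` and
`-∫ f(x) Aφ(x) dx = (1/2) ∫∫_{|x-y|>1} (f(x)-f(y))(φ(x)-φ(y)) ρ(x-y) dx dy`. -/
theorem stmt5 (ρ φ f : ℝ → ℝ) (C δ : ℝ) (hδ : δ ∈ Set.Ioc (0 : ℝ) 1)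
    (hρmeas : Measurable ρ) (hρpos : ∀ z, 0 ≤ ρ z) (hρsymm : ∀ z, ρ (-z) = ρ z)
    (hρvan : ∀ z : ℝ, |z| ≤ 1 → ρ z = 0)
    (hρint : IntegrableOn (fun z : ℝ => |z| ^ δ * ρ z) {z : ℝ | 1 < |z|})
    (hφmeas : Measurable φ)
    (hφ : ∀ x y : ℝ, 1 ≤ |x - y| → |φ x - φ y| ≤ C * |x - y| ^ δ)
    (hfmeas : Measurable f) (hfbdd : ∃ M : ℝ, ∀ x, |f x| ≤ M)
    (hfsupp : HasCompactSupport f) :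
    IntegrableOn
        (fun p : ℝ × ℝ => |f p.1 - f p.2| * |φ p.1 - φ p.2| * ρ (p.1 - p.2))
        {p : ℝ × ℝ | 1 < |p.1 - p.2|} ∧
      -∫ x : ℝ, f x * ∫ z in {z : ℝ | 1 < |z|}, (φ (x + z) - φ x) * ρ z =
        (1 / 2) * ∫ p in {p : ℝ × ℝ | 1 < |p.1 - p.2|},
          (f p.1 - f p.2) * (φ p.1 - φ p.2) * ρ (p.1 - p.2) := by
  obtain ⟨M, hM⟩ := hfbdd
  -- integrability of w z = |z|^δ * ρ z over all of ℝ
  set w : ℝ → ℝ := fun z => |z| ^ δ * ρ z with hw_def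
  have hw : Integrable w := by
    rw [← integrableOn_iff_integrable_of_support_subset
      (s := {z : ℝ | 1 < |z|}) ?_]
    · exact hρint
    · intro z hz
      by_contra hzs
      simp only [mem_setOf_eq, not_lt] at hzs
      exact hz (by simp [hw_def, hρvan z hzs])
  -- key pointwise bound
  have key : ∀ x z : ℝ, |φ (x + z) - φ x| * ρ z ≤ C * w z := by
    intro x z
    rcases le_or_gt |z| 1 with h | h
    · simp [hw_def, hρvan z h]
    · have : |φ (x + z) - φ x| ≤ C * |z| ^ δ := by
        have := hφ (x + z) x (by simp [le_of_lt h])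
        simpa using this
      calc |φ (x + z) - φ x| * ρ z ≤ (C * |z| ^ δ) * ρ z :=
            mul_le_mul_of_nonneg_right this (hρpos z)
        _ = C * w z := by simp [hw_def]; ring
  -- f is integrable
  have hf_int : Integrable f := by
    have hKs : MeasurableSet (tsupport f) := (isClosed_tsupport f).measurableSet
    have hconst : IntegrableOn (fun _ : ℝ => M) (tsupport f) volume :=
      integrableOn_const hfsupp.measure_lt_top.ne
    have hind : Integrable ((tsupport f).indicator (fun _ => M)) :=
      hconst.integrable_indicator hKs
    refine hind.mono' hfmeas.aestronglyMeasurable (ae_of_all _ fun x => ?_)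
    by_cases hx : x ∈ tsupport f
    · simp only [indicator_of_mem hx]
      exact hM x
    · have : f x = 0 := image_eq_zero_of_notMem_tsupport hx
      simp [indicator_of_notMem hx, this]
  -- the function g on the product space
  set g : ℝ × ℝ → ℝ := fun p => f p.1 * ((φ (p.1 + p.2) - φ p.1) * ρ p.2) with hg_def
  have hg_meas : Measurable g :=
    (hfmeas.comp measurable_fst).mul
      (((hφmeas.comp (measurable_fst.add measurable_snd)).sub
        (hφmeas.comp measurable_fst)).mul (hρmeas.comp measurable_snd))
  have hg_int : Integrable g (volume.prod volume) := by
    have hD : Integrable (fun p : ℝ × ℝ => |f p.1| * (C * w p.2)) (volume.prod volume) :=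
      Integrable.mul_prod hf_int.abs (hw.const_mul C)
    refine hD.mono' hg_meas.aestronglyMeasurable (ae_of_all _ fun p => ?_)
    have h1 : ‖g p‖ = |f p.1| * (|φ (p.1 + p.2) - φ p.1| * ρ p.2) := by
      simp [hg_def, abs_mul, abs_of_nonneg (hρpos p.2)]
    rw [h1]
    exact mul_le_mul_of_nonneg_left (key p.1 p.2) (abs_nonneg _)
  -- transfer to h(x,y) = f x (φ y - φ x) ρ(x - y)
  set h : ℝ × ℝ → ℝ := fun p => f p.1 * ((φ p.2 - φ p.1) * ρ (p.1 - p.2)) with hh_def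
  have hρs : ∀ a b : ℝ, ρ (a - b) = ρ (b - a) := fun a b => by
    rw [← hρsymm (b - a)]; ring_nf
  have hge : ∀ p : ℝ × ℝ, g (p.1, p.2 - p.1) = h p := by
    intro p
    simp only [hg_def, hh_def]
    rw [add_sub_cancel, hρs p.1 p.2]
  let E : ℝ × ℝ ≃ᵐ ℝ × ℝ :=
    { toFun := fun p => (p.1, p.2 - p.1)
      invFun := fun p => (p.1, p.2 + p.1)
      left_inv := fun p => by simp
      right_inv := fun p => by simp
      measurable_toFun := measurable_fst.prodMk (measurable_snd.sub measurable_fst)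
      measurable_invFun := measurable_fst.prodMk (measurable_snd.add measurable_fst) }
  have hmp : MeasurePreserving (fun p : ℝ × ℝ => (p.1, p.2 - p.1))
      (volume.prod volume) (volume.prod volume) :=
    measurePreserving_prod_sub volume volume
  have hh_int : Integrable h (volume.prod volume) := by
    have : Integrable (g ∘ fun p : ℝ × ℝ => (p.1, p.2 - p.1)) (volume.prod volume) :=
      (hmp.integrable_comp_emb E.measurableEmbedding).mpr hg_int
    refine this.congr (ae_of_all _ fun p => ?_)
    exact hge p
  -- h' = h ∘ swap (up to symmetry of ρ)
  set h' : ℝ × ℝ → ℝ := fun p => f p.2 * ((φ p.1 - φ p.2) * ρ (p.1 - p.2)) with hh'_def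
  have hh'_int : Integrable h' (volume.prod volume) := by
    refine (hh_int.swap).congr (ae_of_all _ fun p => ?_)
    simp only [Function.comp_apply, Prod.swap, hh_def, hh'_def]
    rw [hρs p.2 p.1]
  -- the symmetric integrand F
  set F : ℝ × ℝ → ℝ := fun p => (f p.1 - f p.2) * (φ p.1 - φ p.2) * ρ (p.1 - p.2) with hF_def
  have hF_eq : ∀ p, F p = -(h p + h' p) := by
    intro p; simp only [hF_def, hh_def, hh'_def]; ring
  have hF_int : Integrable F (volume.prod volume) := by
    refine ((hh_int.add hh'_int).neg).congr (ae_of_all _ fun p => (hF_eq p).symm)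
  have habs : ∀ p : ℝ × ℝ, |f p.1 - f p.2| * |φ p.1 - φ p.2| * ρ (p.1 - p.2) = |F p| := by
    intro p
    simp [hF_def, abs_mul, abs_of_nonneg (hρpos (p.1 - p.2))]
  constructor
  · have : Integrable (fun p : ℝ × ℝ => |F p|) (volume.prod volume) := hF_int.abs
    refine ((this.congr (ae_of_all _ fun p => (habs p).symm)).integrableOn)
  -- the identity
  · have hAe : ∀ x : ℝ, (∫ z in {z : ℝ | 1 < |z|}, (φ (x + z) - φ x) * ρ z) =
        ∫ z, (φ (x + z) - φ x) * ρ z := by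
      intro x
      refine setIntegral_eq_integral_of_forall_compl_eq_zero fun z hz => ?_
      simp only [mem_setOf_eq, not_lt] at hz
      simp [hρvan z hz]
    have step1 : (∫ x : ℝ, f x * ∫ z in {z : ℝ | 1 < |z|}, (φ (x + z) - φ x) * ρ z)
        = ∫ p, g p ∂(volume.prod volume) := by
      have e1 : (∫ x : ℝ, f x * ∫ z in {z : ℝ | 1 < |z|}, (φ (x + z) - φ x) * ρ z)
          = ∫ x : ℝ, ∫ z : ℝ, g (x, z) := by
        refine integral_congr_ae (ae_of_all _ fun x => ?_)
        simp only [hg_def]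
        rw [hAe x, integral_const_mul]
      rw [e1]
      exact integral_integral hg_int
    have step2 : (∫ p, g p ∂(volume.prod volume)) = ∫ p, h p ∂(volume.prod volume) := by
      rw [← hmp.integral_comp E.measurableEmbedding g]
      exact integral_congr_ae (ae_of_all _ fun p => hge p)
    have step3 : (∫ p, h p ∂(volume.prod volume)) = ∫ p, h' p ∂(volume.prod volume) := by
      rw [← (Measure.measurePreserving_swap (μ := (volume : Measure ℝ)) (ν := volume)).integral_comp
        MeasurableEquiv.prodComm.measurableEmbedding h]
      refine integral_congr_ae (ae_of_all _ fun p => ?_)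
      simp only [hh_def, hh'_def, Prod.swap]
      rw [hρs p.2 p.1]
    have hsum : (∫ p, F p ∂(volume.prod volume))
        = -(2 * ∫ p, g p ∂(volume.prod volume)) := by
      have : (∫ p, F p ∂(volume.prod volume))
          = ∫ p, -(h p + h' p) ∂(volume.prod volume) :=
        integral_congr_ae (ae_of_all _ fun p => hF_eq p)
      rw [this, integral_neg, integral_add hh_int hh'_int, ← step3, ← step2]
      ring
    have hset : (∫ p in {p : ℝ × ℝ | 1 < |p.1 - p.2|},
        (f p.1 - f p.2) * (φ p.1 - φ p.2) * ρ (p.1 - p.2))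
        = ∫ p, F p ∂(volume.prod volume) := by
      refine setIntegral_eq_integral_of_forall_compl_eq_zero fun p hp => ?_
      simp only [mem_setOf_eq, not_lt] at hp
      simp [hF_def, hρvan _ hp]
    rw [hset, hsum, step1]
    ring
end

section
/- For α ∈ (1,2) and θ ∈ (0,1), define E(α,θ) = 2/(α-θ) + 2α ∑_{i=1}^∞ [(θ-1)(θ-2)⋯(θ-2i+1)/(2i)!] · (1/(2i-α) + 1/(2i+α-θ)). Then the series converges absolutely and lim_{θ → 0⁺} E(α,θ) = π cot(πα/2). -/
open Real Filter

lemma aux_summable_sq : Summable (fun n : ℕ => 1 / ((n : ℝ) + 1) ^ 2) := by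
  have h := (Real.summable_one_div_nat_pow (p := 2)).mpr one_lt_two
  have := (summable_nat_add_iff (f := fun n : ℕ => 1 / (n : ℝ) ^ 2) 1).mpr h
  simpa using this

lemma aux_cot_tsum (x : ℝ) (hx : x ∈ Set.Ioo (0 : ℝ) 1) :
    ∑' n : ℕ, 2 * x / (x ^ 2 - ((n : ℝ) + 1) ^ 2)
      = Real.pi * Real.cot (Real.pi * x) - 1 / x := by
  obtain ⟨hx0, hx1⟩ := hx
  set b : ℝ := (x + 1) / 2 with hb_def
  have hxb : x < b := by rw [hb_def]; linarith
  have hb0 : 0 < b := by rw [hb_def]; linarith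
  have hb1 : b < 1 := by rw [hb_def]; linarith
  have hb2 : 0 < 1 - b ^ 2 := by nlinarith
  set t : Set ℝ := Set.Ioo (0 : ℝ) b with ht_def
  have hxt : x ∈ t := ⟨hx0, hxb⟩
  set g : ℕ → ℝ → ℝ := fun n y => Real.log (1 - y ^ 2 / ((n : ℝ) + 1) ^ 2) with hg_def
  set g' : ℕ → ℝ → ℝ := fun n y => 2 * y / (y ^ 2 - ((n : ℝ) + 1) ^ 2) with hg'_def
  set u : ℕ → ℝ := fun n => 2 * b / ((1 - b ^ 2) * ((n : ℝ) + 1) ^ 2) with hu_def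
  have hc1 : ∀ n : ℕ, (1 : ℝ) ≤ ((n : ℝ) + 1) := by intro n; simp [Nat.one_le_cast]
  have hcpos : ∀ n : ℕ, (0 : ℝ) < ((n : ℝ) + 1) ^ 2 := by
    intro n; positivity
  have hcsq : ∀ n : ℕ, (1 : ℝ) ≤ ((n : ℝ) + 1) ^ 2 := by
    intro n; nlinarith [hc1 n]
  -- positivity of 1 - y^2/c^2 on t
  have hpos : ∀ (n : ℕ), ∀ y ∈ t, 0 < 1 - y ^ 2 / ((n : ℝ) + 1) ^ 2 := by
    intro n y hy
    have hy0 : 0 < y := hy.1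
    have hyb : y < b := hy.2
    have : y ^ 2 / ((n : ℝ) + 1) ^ 2 ≤ y ^ 2 := by
      apply div_le_self (by positivity) (hcsq n)
    nlinarith
  -- lower bound: c^2 - y^2 ≥ (1-b^2) c^2 on t
  have hlow : ∀ (n : ℕ), ∀ y ∈ t, (1 - b ^ 2) * ((n : ℝ) + 1) ^ 2 ≤ ((n : ℝ) + 1) ^ 2 - y ^ 2 := by
    intro n y hy
    have hyb : y < b := hy.2
    have hy0 : 0 < y := hy.1
    nlinarith [hcsq n]
  -- derivative
  have hderiv : ∀ (n : ℕ), ∀ y ∈ t, HasDerivAt (g n) (g' n y) y := by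
    intro n y hy
    have hne : 1 - y ^ 2 / ((n : ℝ) + 1) ^ 2 ≠ 0 := ne_of_gt (hpos n y hy)
    have h1 : HasDerivAt (fun z : ℝ => 1 - z ^ 2 / ((n : ℝ) + 1) ^ 2)
        (-(2 * y) / ((n : ℝ) + 1) ^ 2) y := by
      have := ((hasDerivAt_pow 2 y).div_const (((n : ℝ) + 1) ^ 2)).const_sub 1
      simpa [neg_div] using this
    have := (Real.hasDerivAt_log hne).comp y h1
    refine this.congr_deriv ?_
    symm
    have hc0 : ((n : ℝ) + 1) ^ 2 ≠ 0 := ne_of_gt (hcpos n)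
    have hy2 : y ^ 2 - ((n : ℝ) + 1) ^ 2 ≠ 0 := by
      have hyb : y < b := hy.2
      have : y ^ 2 < ((n : ℝ) + 1) ^ 2 := by nlinarith [hcsq n, hy.1]
      intro h; nlinarith
    rw [hg'_def]
    simp only
    have h5 : (1 : ℝ) - y ^ 2 / ((n : ℝ) + 1) ^ 2
        = -((y ^ 2 - ((n : ℝ) + 1) ^ 2) / ((n : ℝ) + 1) ^ 2) := by
      field_simp
      ring
    rw [h5, inv_neg, inv_div, neg_mul, neg_div, mul_neg, neg_neg, div_mul_div_comm]
    rw [div_eq_div_iff hy2 (mul_ne_zero hy2 hc0)]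
    ring
  -- bound on derivative
  have hbound : ∀ (n : ℕ), ∀ y ∈ t, ‖g' n y‖ ≤ u n := by
    intro n y hy
    have hy0 : 0 < y := hy.1
    have hyb : y < b := hy.2
    have hd : 0 < ((n : ℝ) + 1) ^ 2 - y ^ 2 := lt_of_lt_of_le (by positivity) (hlow n y hy)
    have habs : ‖g' n y‖ = 2 * y / (((n : ℝ) + 1) ^ 2 - y ^ 2) := by
      rw [hg'_def, Real.norm_eq_abs]
      rw [abs_div, abs_of_pos (by linarith : (0:ℝ) < 2 * y),
        abs_of_neg (by linarith : y ^ 2 - ((n : ℝ) + 1) ^ 2 < 0)]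
      ring_nf
    rw [habs, hu_def]
    apply div_le_div₀ (by positivity) (by linarith) (by positivity) (hlow n y hy)
  have hu : Summable u := by
    have := aux_summable_sq.mul_left (2 * b / (1 - b ^ 2))
    apply this.congr
    intro n
    rw [hu_def]
    field_simp
  -- summability of g at any point of t
  have hgsum : ∀ y ∈ t, Summable fun n => g n y := by
    intro y hy
    have hy0 : 0 < y := hy.1
    have hyb : y < b := hy.2
    apply Summable.of_abs
    apply Summable.of_nonneg_of_le (fun n => abs_nonneg _)
      (fun n => ?_) (aux_summable_sq.mul_left (y ^ 2 / (1 - b ^ 2)))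
    have hpn := hpos n y hy
    have hgle : g n y ≤ 0 := by
      rw [hg_def]
      apply Real.log_nonpos
      · linarith
      · have : 0 ≤ y ^ 2 / ((n : ℝ) + 1) ^ 2 := by positivity
        linarith
    rw [abs_of_nonpos hgle, hg_def]
    simp only
    rw [← Real.log_inv]
    have h2 : Real.log (1 - y ^ 2 / ((n : ℝ) + 1) ^ 2)⁻¹
        ≤ (1 - y ^ 2 / ((n : ℝ) + 1) ^ 2)⁻¹ - 1 :=
      Real.log_le_sub_one_of_pos (by positivity)
    have h3 : (1 - y ^ 2 / ((n : ℝ) + 1) ^ 2)⁻¹ - 1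
        = (y ^ 2 / ((n : ℝ) + 1) ^ 2) / (1 - y ^ 2 / ((n : ℝ) + 1) ^ 2) := by
      rw [inv_eq_one_div, div_sub_one (ne_of_gt hpn)]
      congr 1
      ring
    have hq : y ^ 2 / ((n : ℝ) + 1) ^ 2 ≤ b ^ 2 :=
      le_trans (div_le_self (by positivity) (hcsq n)) (by nlinarith)
    have h4 : (y ^ 2 / ((n : ℝ) + 1) ^ 2) / (1 - y ^ 2 / ((n : ℝ) + 1) ^ 2)
        ≤ (y ^ 2 / ((n : ℝ) + 1) ^ 2) / (1 - b ^ 2) := by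
      apply div_le_div_of_nonneg_left (by positivity) hb2
      linarith
    calc Real.log (1 - y ^ 2 / ((n : ℝ) + 1) ^ 2)⁻¹
        ≤ (y ^ 2 / ((n : ℝ) + 1) ^ 2) / (1 - y ^ 2 / ((n : ℝ) + 1) ^ 2) := by rw [← h3]; exact h2
      _ ≤ (y ^ 2 / ((n : ℝ) + 1) ^ 2) / (1 - b ^ 2) := h4
      _ = y ^ 2 / (1 - b ^ 2) * (1 / ((n : ℝ) + 1) ^ 2) := by field_simp
  -- term-by-term differentiation
  have hmain : HasDerivAt (fun z => ∑' n, g n z) (∑' n, g' n x) x :=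
    hasDerivAt_tsum_of_isPreconnected hu isOpen_Ioo (convex_Ioo 0 b).isPreconnected
      hderiv hbound hxt (hgsum x hxt) hxt
  -- identify the sum of logs via Euler product
  have hident : ∀ y ∈ t, ∑' n, g n y = Real.log (Real.sin (Real.pi * y)) - Real.log (Real.pi * y) := by
    intro y hy
    have hy0 : 0 < y := hy.1
    have hyb : y < b := hy.2
    have hpy : 0 < Real.pi * y := by positivity
    have hsin : 0 < Real.sin (Real.pi * y) := by
      apply Real.sin_pos_of_pos_of_lt_pi hpy
      have : y < 1 := lt_trans hyb hb1
      nlinarith [Real.pi_pos]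
    have heuler := Real.tendsto_euler_sin_prod y
    have hlog : Tendsto (fun n : ℕ => Real.log (Real.pi * y *
        ∏ j ∈ Finset.range n, ((1 : ℝ) - y ^ 2 / ((j : ℝ) + 1) ^ 2))) atTop
        (nhds (Real.log (Real.sin (Real.pi * y)))) :=
      ((Real.continuousAt_log (ne_of_gt hsin)).tendsto).comp heuler
    have hrw : ∀ n : ℕ, Real.log (Real.pi * y *
        ∏ j ∈ Finset.range n, ((1 : ℝ) - y ^ 2 / ((j : ℝ) + 1) ^ 2))
        = Real.log (Real.pi * y) + ∑ j ∈ Finset.range n, g j y := by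
      intro n
      have hprodpos : ∀ j ∈ Finset.range n, ((1 : ℝ) - y ^ 2 / ((j : ℝ) + 1) ^ 2) ≠ 0 :=
        fun j _ => ne_of_gt (hpos j y hy)
      rw [Real.log_mul (ne_of_gt hpy), Real.log_prod hprodpos]
      exact Finset.prod_ne_zero_iff.mpr hprodpos
    rw [funext hrw] at hlog
    have hsum := (hgsum y hy).hasSum.tendsto_sum_nat
    have hcomb : Tendsto (fun n : ℕ => Real.log (Real.pi * y) + ∑ j ∈ Finset.range n, g j y)
        atTop (nhds (Real.log (Real.pi * y) + ∑' n, g n y)) :=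
      tendsto_const_nhds.add hsum
    have := tendsto_nhds_unique hlog hcomb
    linarith
  -- the reference function has the expected derivative
  have hsinx : 0 < Real.sin (Real.pi * x) := by
    apply Real.sin_pos_of_pos_of_lt_pi (by positivity)
    nlinarith [Real.pi_pos]
  have hF : HasDerivAt (fun y => Real.log (Real.sin (Real.pi * y)) - Real.log (Real.pi * y))
      (Real.pi * Real.cot (Real.pi * x) - 1 / x) x := by
    have h1 : HasDerivAt (fun y : ℝ => Real.pi * y) Real.pi x := by
      simpa using (hasDerivAt_id x).const_mul Real.pi
    have h2 : HasDerivAt (fun y : ℝ => Real.sin (Real.pi * y)) (Real.cos (Real.pi * x) * Real.pi) x :=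
      (Real.hasDerivAt_sin (Real.pi * x)).comp x h1
    have h3 : HasDerivAt (fun y : ℝ => Real.log (Real.sin (Real.pi * y)))
        ((Real.sin (Real.pi * x))⁻¹ * (Real.cos (Real.pi * x) * Real.pi)) x :=
      by have := (Real.hasDerivAt_log (ne_of_gt hsinx)).comp x h2; exact this
    have h4 : HasDerivAt (fun y : ℝ => Real.log (Real.pi * y))
        ((Real.pi * x)⁻¹ * Real.pi) x :=
      (Real.hasDerivAt_log (by positivity)).comp x h1
    have := h3.sub h4
    refine this.congr_deriv ?_
    symm
    rw [Real.cot_eq_cos_div_sin]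
    have : Real.sin (Real.pi * x) ≠ 0 := ne_of_gt hsinx
    have hxne : x ≠ 0 := ne_of_gt hx0
    field_simp
  -- transfer derivative through eventual equality
  have heq : (fun z => ∑' n, g n z) =ᶠ[nhds x]
      (fun y => Real.log (Real.sin (Real.pi * y)) - Real.log (Real.pi * y)) := by
    filter_upwards [isOpen_Ioo.mem_nhds hxt] with z hz
    exact hident z hz
  have hmain2 : HasDerivAt (fun z => ∑' n, g n z)
      (Real.pi * Real.cot (Real.pi * x) - 1 / x) x :=
    hF.congr_of_eventuallyEq heq
  have := hmain.unique hmain2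
  rw [← this]

set_option maxHeartbeats 2000000 in
/-- For `α ∈ (1,2)` and `θ ∈ (0,1)`, define
`E(α,θ) = 2/(α-θ) + 2α ∑_{i=1}^∞ [(θ-1)(θ-2)⋯(θ-2i+1)/(2i)!] (1/(2i-α) + 1/(2i+α-θ))`.
The series converges absolutely and `lim_{θ→0⁺} E(α,θ) = π cot(πα/2)`. -/
theorem stmt8 (α : ℝ) (hα : α ∈ Set.Ioo (1 : ℝ) 2) :
    (∀ θ ∈ Set.Ioo (0 : ℝ) 1,
      Summable fun i : ℕ =>
        |(∏ j ∈ Finset.range (2 * i + 1), (θ - ((j : ℝ) + 1))) /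
            ((2 * (i + 1)).factorial : ℝ) *
          (1 / (2 * ((i : ℝ) + 1) - α) + 1 / (2 * ((i : ℝ) + 1) + α - θ))|) ∧
      Filter.Tendsto
        (fun θ : ℝ =>
          2 / (α - θ) +
            2 * α *
              ∑' i : ℕ,
                (∏ j ∈ Finset.range (2 * i + 1), (θ - ((j : ℝ) + 1))) /
                    (((2 * (i + 1)).factorial : ℝ)) *
                  (1 / (2 * ((i : ℝ) + 1) - α) + 1 / (2 * ((i : ℝ) + 1) + α - θ)))
        (nhdsWithin 0 (Set.Ioi 0))
        (nhds (Real.pi * Real.cot (Real.pi * α / 2))) := by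
  obtain ⟨hα1, hα2⟩ := hα
  set C : ℝ := 1 / (2 - α) + 1 with hC_def
  set F : ℝ → ℕ → ℝ := fun θ i =>
    (∏ j ∈ Finset.range (2 * i + 1), (θ - ((j : ℝ) + 1))) /
        ((2 * (i + 1)).factorial : ℝ) *
      (1 / (2 * ((i : ℝ) + 1) - α) + 1 / (2 * ((i : ℝ) + 1) + α - θ)) with hF_def
  have h2α : (0 : ℝ) < 2 - α := by linarith
  have hk1 : ∀ i : ℕ, (1 : ℝ) ≤ (i : ℝ) + 1 := fun i => by
    have : (0:ℝ) ≤ (i:ℝ) := Nat.cast_nonneg i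
    linarith
  have hfac : ∀ i : ℕ, ((2 * (i + 1)).factorial : ℝ)
      = (2 * ((i : ℝ) + 1)) * ((2 * i + 1).factorial : ℝ) := by
    intro i
    have h : 2 * (i + 1) = (2 * i + 1) + 1 := by ring
    rw [h, Nat.factorial_succ]
    push_cast
    ring
  have hNpos : ∀ i : ℕ, (0 : ℝ) < ((2 * i + 1).factorial : ℝ) := fun i => by
    exact_mod_cast Nat.factorial_pos (2 * i + 1)
  -- uniform bound
  have hbound : ∀ θ ∈ Set.Ioo (0:ℝ) 1, ∀ i : ℕ, |F θ i| ≤ C * (1 / ((i : ℝ) + 1) ^ 2) := by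
    intro θ hθ i
    obtain ⟨hθ0, hθ1⟩ := hθ
    have hk := hk1 i
    have hkpos : (0:ℝ) < (i : ℝ) + 1 := by linarith
    have hApos : (0:ℝ) < 2 * ((i : ℝ) + 1) - α := by nlinarith
    have hBpos : (0:ℝ) < 2 * ((i : ℝ) + 1) + α - θ := by nlinarith
    have hfacpos : (0:ℝ) < ((2 * (i + 1)).factorial : ℝ) := by
      exact_mod_cast Nat.factorial_pos (2 * (i + 1))
    -- product bound
    have hprodcast : (∏ j ∈ Finset.range (2 * i + 1), ((j : ℝ) + 1)) = ((2 * i + 1).factorial : ℝ) := by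
      rw [← Finset.prod_range_add_one_eq_factorial (2 * i + 1)]
      push_cast
      rfl
    have h1 : |∏ j ∈ Finset.range (2 * i + 1), (θ - ((j : ℝ) + 1))| ≤ ((2 * i + 1).factorial : ℝ) := by
      rw [Finset.abs_prod, ← hprodcast]
      apply Finset.prod_le_prod (fun j _ => abs_nonneg _)
      intro j _
      have hj : (0:ℝ) ≤ (j : ℝ) := Nat.cast_nonneg j
      rw [abs_le]
      constructor <;> nlinarith
    have e1 : |∏ j ∈ Finset.range (2 * i + 1), (θ - ((j : ℝ) + 1))| / ((2 * (i + 1)).factorial : ℝ)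
        ≤ 1 / (2 * ((i : ℝ) + 1)) := by
      rw [hfac i, div_le_div_iff₀ (by positivity) (by positivity)]
      nlinarith [hNpos i]
    have e2 : 1 / (2 * ((i : ℝ) + 1) - α) ≤ 1 / ((2 - α) * ((i : ℝ) + 1)) := by
      apply one_div_le_one_div_of_le (by positivity)
      nlinarith
    have e3 : 1 / (2 * ((i : ℝ) + 1) + α - θ) ≤ 1 / ((i : ℝ) + 1) := by
      apply one_div_le_one_div_of_le hkpos
      nlinarith
    have habs : |F θ i| = |∏ j ∈ Finset.range (2 * i + 1), (θ - ((j : ℝ) + 1))| /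
        ((2 * (i + 1)).factorial : ℝ) *
        (1 / (2 * ((i : ℝ) + 1) - α) + 1 / (2 * ((i : ℝ) + 1) + α - θ)) := by
      have hbr : (0:ℝ) < 1 / (2 * ((i : ℝ) + 1) - α) + 1 / (2 * ((i : ℝ) + 1) + α - θ) :=
        add_pos (one_div_pos.mpr hApos) (one_div_pos.mpr hBpos)
      rw [hF_def]
      simp only
      rw [abs_mul, abs_div, abs_of_pos hfacpos, abs_of_pos hbr]
    rw [habs]
    calc |∏ j ∈ Finset.range (2 * i + 1), (θ - ((j : ℝ) + 1))| /
          ((2 * (i + 1)).factorial : ℝ) *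
          (1 / (2 * ((i : ℝ) + 1) - α) + 1 / (2 * ((i : ℝ) + 1) + α - θ))
        ≤ 1 / (2 * ((i : ℝ) + 1)) * (1 / ((2 - α) * ((i : ℝ) + 1)) + 1 / ((i : ℝ) + 1)) := by
          apply mul_le_mul e1 (by linarith) (by positivity) (by positivity)
      _ = (1 / (2 * (2 - α)) + 1 / 2) * (1 / ((i : ℝ) + 1) ^ 2) := by
          field_simp
      _ ≤ C * (1 / ((i : ℝ) + 1) ^ 2) := by
          apply mul_le_mul_of_nonneg_right _ (by positivity)
          rw [hC_def]
          have : 1 / (2 * (2 - α)) ≤ 1 / (2 - α) := by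
            apply one_div_le_one_div_of_le h2α
            linarith
          linarith
  have hsumbound : Summable (fun i : ℕ => C * (1 / ((i : ℝ) + 1) ^ 2)) :=
    aux_summable_sq.mul_left C
  constructor
  · intro θ hθ
    exact Summable.of_nonneg_of_le (fun i => abs_nonneg _) (hbound θ hθ) hsumbound
  -- continuity of each term
  have hab : ∀ i : ℕ, Tendsto (fun θ => F θ i) (nhdsWithin 0 (Set.Ioi 0)) (nhds (F 0 i)) := by
    intro i
    have hne : 2 * ((i : ℝ) + 1) + α - 0 ≠ 0 := by
      have := hk1 i
      intro h
      nlinarith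
    have hc : ContinuousAt (fun θ => F θ i) 0 := by
      rw [hF_def]
      apply ContinuousAt.mul
      · apply ContinuousAt.div_const
        exact (Continuous.continuousAt (by continuity))
      · apply ContinuousAt.add continuousAt_const
        exact ContinuousAt.div continuousAt_const (by fun_prop) hne
    exact hc.tendsto.mono_left nhdsWithin_le_nhds
  have h_bound : ∀ᶠ θ in nhdsWithin (0:ℝ) (Set.Ioi 0), ∀ i : ℕ, ‖F θ i‖ ≤ C * (1 / ((i : ℝ) + 1) ^ 2) := by
    filter_upwards [Ioo_mem_nhdsGT_of_mem (by norm_num : (0:ℝ) ∈ Set.Ico (0:ℝ) 1)] with θ hθ i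
    rw [Real.norm_eq_abs]
    exact hbound θ hθ i
  have htsum : Tendsto (fun θ => ∑' i, F θ i) (nhdsWithin 0 (Set.Ioi 0))
      (nhds (∑' i, F 0 i)) :=
    tendsto_tsum_of_dominated_convergence hsumbound hab h_bound
  have hfirst : Tendsto (fun θ : ℝ => 2 / (α - θ)) (nhdsWithin 0 (Set.Ioi 0)) (nhds (2 / α)) := by
    have hne : α - (0:ℝ) ≠ 0 := by intro h; nlinarith
    have hc : ContinuousAt (fun θ : ℝ => 2 / (α - θ)) 0 :=
      ContinuousAt.div continuousAt_const (by fun_prop) hne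
    have h' : Tendsto (fun θ : ℝ => 2 / (α - θ)) (nhdsWithin 0 (Set.Ioi 0))
        (nhds (2 / (α - 0))) := hc.tendsto.mono_left nhdsWithin_le_nhds
    simpa using h'
  have hcomb : Tendsto (fun θ : ℝ => 2 / (α - θ) + 2 * α * ∑' i, F θ i)
      (nhdsWithin 0 (Set.Ioi 0)) (nhds (2 / α + 2 * α * ∑' i, F 0 i)) :=
    hfirst.add (htsum.const_mul (2 * α))
  -- final identity
  have hx : α / 2 ∈ Set.Ioo (0:ℝ) 1 := ⟨by linarith, by linarith⟩
  have hcot := aux_cot_tsum (α / 2) hx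
  have hterm : ∀ i : ℕ, 2 * α * F 0 i = 2 * (α / 2) / ((α / 2) ^ 2 - ((i : ℝ) + 1) ^ 2) := by
    intro i
    have hk := hk1 i
    have hP : (∏ j ∈ Finset.range (2 * i + 1), ((0:ℝ) - ((j : ℝ) + 1)))
        = -((2 * i + 1).factorial : ℝ) := by
      have h0 : ∀ j ∈ Finset.range (2 * i + 1), (0:ℝ) - ((j : ℝ) + 1) = (-1) * ((j : ℝ) + 1) := by
        intro j _; ring
      rw [Finset.prod_congr rfl h0, Finset.prod_mul_distrib, Finset.prod_const,
        Finset.card_range]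
      have hodd : (-1 : ℝ) ^ (2 * i + 1) = -1 := Odd.neg_one_pow ⟨i, by ring⟩
      rw [hodd]
      have hprodcast : (∏ j ∈ Finset.range (2 * i + 1), ((j : ℝ) + 1)) = ((2 * i + 1).factorial : ℝ) := by
        rw [← Finset.prod_range_add_one_eq_factorial (2 * i + 1)]
        push_cast
        rfl
      rw [hprodcast]
      ring
    have hApos : (0:ℝ) < 2 * ((i : ℝ) + 1) - α := by nlinarith
    have hBpos : (0:ℝ) < 2 * ((i : ℝ) + 1) + α := by nlinarith
    have hxk : (0:ℝ) < ((i : ℝ) + 1) ^ 2 - (α / 2) ^ 2 := by nlinarith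
    have hne1 : 2 * ((i : ℝ) + 1) - α ≠ 0 := ne_of_gt hApos
    have hne2 : 2 * ((i : ℝ) + 1) + α ≠ 0 := ne_of_gt hBpos
    have hne3 : (α / 2) ^ 2 - ((i : ℝ) + 1) ^ 2 ≠ 0 := by intro h; nlinarith
    have hN : ((2 * i + 1).factorial : ℝ) ≠ 0 := ne_of_gt (hNpos i)
    have hkne : 2 * ((i : ℝ) + 1) ≠ 0 := by positivity
    rw [hF_def]
    simp only
    rw [sub_zero, hP, hfac i, div_add_div _ _ hne1 hne2, div_mul_div_comm, ← mul_div_assoc,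
      div_eq_div_iff (mul_ne_zero (mul_ne_zero hkne hN) (mul_ne_zero hne1 hne2)) hne3]
    ring
  have hfinal : 2 / α + 2 * α * ∑' i, F 0 i = Real.pi * Real.cot (Real.pi * α / 2) := by
    have h1 : 2 * α * ∑' i, F 0 i = ∑' i, 2 * α * F 0 i := (tsum_mul_left).symm
    rw [h1, tsum_congr hterm, hcot]
    rw [one_div_div]
    have : Real.pi * (α / 2) = Real.pi * α / 2 := by ring
    rw [this]
    ring
  rw [← hfinal]
  exact hcomb
end

section
/- Let α ∈ (1,2), γ ∈ (1,α], and μ(dx) = C_γ(1+|x|)^{-γ}dx a probability measure on ℝ. Then there is no decreasing function β : (0,∞) → (0,∞) such that μ(f²) ≤ r E(f,f) + β(r) μ(|f|)² for all r > 0 and f in the form domain, where E is the α-stable Dirichlet form. Specifically, testing with cutoff functions g_n yields c₃ n^{1-γ} ≤ c r n^{1-α} + c₄ β(r) n^{2(1-γ)} for all n, which forces c₃ ≤ cr for all r > 0, a contradiction. -/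
open Real MeasureTheory Set

lemma phi_est {α N : ℝ} (hα1 : 1 < α) (hα2 : α < 2) (hN : 1 ≤ N) :
    Integrable (fun u : ℝ => min (u ^ 2 / N ^ 2) 1 * |u| ^ (-(1 + α))) ∧
    ∫ u : ℝ, min (u ^ 2 / N ^ 2) 1 * |u| ^ (-(1 + α)) ≤ (2 / (2 - α) + 2 / α) * N ^ (-α) := by
  have hN0 : (0 : ℝ) < N := lt_of_lt_of_le one_pos hN
  set Φ : ℝ → ℝ := fun t => min (t ^ 2 / N ^ 2) 1 * t ^ (-(1 + α)) with hΦ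
  have habs : (fun u : ℝ => min (u ^ 2 / N ^ 2) 1 * |u| ^ (-(1 + α))) = fun u => Φ |u| := by
    funext u; simp [hΦ, sq_abs]
  have hrpowm : ∀ c : ℝ, Measurable fun t : ℝ => t ^ c := fun c =>
    measurable_of_continuousOn_compl_singleton 0
      (continuousOn_id.rpow_const fun x hx => Or.inl hx)
  have hΦmeas : Measurable Φ :=
    (((measurable_id.pow_const 2).div_const _).min measurable_const).mul (hrpowm _)
  have hΦnonneg : ∀ t ∈ Ioi (0:ℝ), 0 ≤ Φ t := by
    intro t ht
    exact mul_nonneg (le_min (by positivity) one_pos.le) (rpow_nonneg (le_of_lt ht) _)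
  -- majorant on (0, N]
  have hm1 : IntegrableOn (fun t : ℝ => t ^ (1 - α) / N ^ 2) (Ioc 0 N) := by
    have h := (intervalIntegral.intervalIntegrable_rpow' (by linarith : (-1:ℝ) < 1 - α) (a := 0) (b := N))
    rw [intervalIntegrable_iff_integrableOn_Ioc_of_le hN0.le] at h
    exact h.div_const _
  have hb1 : ∀ t ∈ Ioc (0:ℝ) N, Φ t ≤ t ^ (1 - α) / N ^ 2 := by
    intro t ht
    have ht0 : (0:ℝ) < t := ht.1
    have : Φ t ≤ (t ^ 2 / N ^ 2) * t ^ (-(1 + α)) :=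
      mul_le_mul_of_nonneg_right (min_le_left _ _) (rpow_nonneg ht0.le _)
    refine this.trans_eq ?_
    rw [div_mul_eq_mul_div, ← rpow_natCast t 2, ← rpow_add ht0]
    norm_num
    congr 1
    ring
  have I1 : IntegrableOn Φ (Ioc 0 N) := by
    refine Integrable.mono' hm1 (hΦmeas.aestronglyMeasurable.restrict) ?_
    refine (ae_restrict_iff' measurableSet_Ioc).2 (Filter.Eventually.of_forall ?_)
    intro t ht
    rw [Real.norm_eq_abs, abs_of_nonneg (hΦnonneg t ht.1)]
    exact hb1 t ht
  have hm2 : IntegrableOn (fun t : ℝ => t ^ (-(1 + α))) (Ioi N) :=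
    integrableOn_Ioi_rpow_of_lt (by linarith) hN0
  have hb2 : ∀ t ∈ Ioi N, Φ t ≤ t ^ (-(1 + α)) := by
    intro t ht
    have ht0 : (0:ℝ) < t := hN0.trans ht
    have : Φ t ≤ 1 * t ^ (-(1 + α)) :=
      mul_le_mul_of_nonneg_right (min_le_right _ _) (rpow_nonneg ht0.le _)
    simpa using this
  have I2 : IntegrableOn Φ (Ioi N) := by
    refine Integrable.mono' hm2 (hΦmeas.aestronglyMeasurable.restrict) ?_
    refine (ae_restrict_iff' measurableSet_Ioi).2 (Filter.Eventually.of_forall ?_)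
    intro t ht
    rw [Real.norm_eq_abs, abs_of_nonneg (hΦnonneg t (lt_trans hN0 ht))]
    exact hb2 t ht
  have IIoi : IntegrableOn Φ (Ioi 0) := by
    rw [← Ioc_union_Ioi_eq_Ioi hN0.le]
    exact I1.union I2
  have Iabs : Integrable (fun u : ℝ => Φ |u|) := by
    have int_Ioi : IntegrableOn (fun u : ℝ => Φ |u|) (Ioi 0) := by
      refine IIoi.congr_fun ?_ measurableSet_Ioi
      intro x hx; simp only [abs_of_pos (mem_Ioi.mp hx)]
    have int_Iic : IntegrableOn (fun u : ℝ => Φ |u|) (Iic 0) := by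
      rw [← Measure.map_neg_eq_self (volume : Measure ℝ)]
      have m : MeasurableEmbedding fun x : ℝ => -x := (Homeomorph.neg ℝ).measurableEmbedding
      rw [m.integrableOn_map_iff]
      simp_rw [Function.comp_def, abs_neg, neg_preimage, neg_Iic, neg_zero]
      exact Iff.mpr integrableOn_Ici_iff_integrableOn_Ioi int_Ioi
    have : IntegrableOn (fun u : ℝ => Φ |u|) (Iic 0 ∪ Ioi 0) := int_Iic.union int_Ioi
    rwa [Iic_union_Ioi, integrableOn_univ] at this
  constructor
  · rw [habs]; exact Iabs
  · rw [habs]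
    rw [integral_comp_abs (f := Φ)]
    have hsplit : ∫ t in Ioi (0:ℝ), Φ t = (∫ t in Ioc (0:ℝ) N, Φ t) + ∫ t in Ioi N, Φ t := by
      rw [← Ioc_union_Ioi_eq_Ioi hN0.le]
      exact setIntegral_union (Ioc_disjoint_Ioi le_rfl) measurableSet_Ioi I1 I2
    have e1 : ∫ t in Ioc (0:ℝ) N, Φ t ≤ N ^ (-α) / (2 - α) := by
      have h1 : ∫ t in Ioc (0:ℝ) N, Φ t ≤ ∫ t in Ioc (0:ℝ) N, t ^ (1 - α) / N ^ 2 :=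
        setIntegral_mono_on I1 hm1 measurableSet_Ioc hb1
      refine h1.trans_eq ?_
      rw [integral_div]
      rw [← intervalIntegral.integral_of_le hN0.le]
      rw [integral_rpow (Or.inl (by linarith : (-1:ℝ) < 1 - α))]
      rw [Real.zero_rpow (by linarith : (1 - α + 1) ≠ 0)]
      have : (1:ℝ) - α + 1 = 2 - α := by ring
      rw [this, sub_zero]
      rw [div_right_comm]
      congr 1
      rw [← rpow_natCast N 2, ← rpow_sub hN0]
      congr 1
      ring
    have e2 : ∫ t in Ioi N, Φ t ≤ N ^ (-α) / α := by
      have h2 : ∫ t in Ioi N, Φ t ≤ ∫ t in Ioi N, t ^ (-(1 + α)) :=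
        setIntegral_mono_on I2 hm2 measurableSet_Ioi hb2
      refine h2.trans_eq ?_
      rw [integral_Ioi_rpow_of_lt (by linarith) hN0]
      rw [show (-(1 + α) + 1 : ℝ) = -α by ring]
      rw [← neg_div_neg_eq, neg_neg, neg_neg]
    calc 2 * ∫ t in Ioi (0:ℝ), Φ t ≤ 2 * (N ^ (-α) / (2 - α) + N ^ (-α) / α) := by
          rw [hsplit]; nlinarith [e1, e2]
        _ = (2 / (2 - α) + 2 / α) * N ^ (-α) := by ring

lemma energy_est {α N : ℝ} (hα1 : 1 < α) (hα2 : α < 2) (hN : 1 ≤ N) :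
    Integrable (fun p : ℝ × ℝ =>
      (min (|p.1| / N) 1 - min (|p.2| / N) 1) ^ 2 * |p.1 - p.2| ^ (-(1 + α))) ∧
    ∫ p : ℝ × ℝ, (min (|p.1| / N) 1 - min (|p.2| / N) 1) ^ 2 * |p.1 - p.2| ^ (-(1 + α)) ≤
      (8 / (2 - α) + 8 / α) * N ^ (1 - α) := by
  have hN0 : (0 : ℝ) < N := lt_of_lt_of_le one_pos hN
  set φ : ℝ → ℝ := fun u => min (u ^ 2 / N ^ 2) 1 * |u| ^ (-(1 + α)) with hφdef
  obtain ⟨hφint, hφval⟩ := phi_est hα1 hα2 hN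
  have hφnonneg : ∀ u, 0 ≤ φ u := fun u =>
    mul_nonneg (le_min (by positivity) one_pos.le) (rpow_nonneg (abs_nonneg _) _)
  have hφeven : ∀ u, φ (-u) = φ u := by intro u; simp [hφdef]
  have hφintval : (0:ℝ) ≤ ∫ u, φ u := integral_nonneg hφnonneg
  set ind : ℝ → ℝ := indicator (Ioo (-N) N) (fun _ => (1:ℝ)) with hinddef
  have hindint : Integrable ind :=
    (integrable_indicator_iff measurableSet_Ioo).2
      (integrableOn_const measure_Ioo_lt_top.ne)
  have hindval : ∫ x, ind x = 2 * N := by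
    rw [hinddef, integral_indicator_const (1:ℝ) measurableSet_Ioo]
    rw [Real.volume_real_Ioo_of_le (by linarith), smul_eq_mul, mul_one, show (N - -N) = 2 * N by ring]
  have hindnonneg : ∀ x, 0 ≤ ind x := fun x => indicator_nonneg (fun _ _ => one_pos.le) x
  -- the separated function
  set h : ℝ × ℝ → ℝ := fun q => ind q.1 * φ q.2 with hhdef
  have hhint : Integrable h (volume : Measure (ℝ × ℝ)) := by
    rw [Measure.volume_eq_prod]
    exact hindint.mul_prod hφint
  have hhval : ∫ q : ℝ × ℝ, h q = (2 * N) * ∫ u, φ u := by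
    rw [Measure.volume_eq_prod, hhdef, integral_prod_mul, hindval]
  -- G₁
  set G₁ : ℝ × ℝ → ℝ := fun p => ind p.1 * φ (p.1 - p.2) with hG₁def
  have hT : MeasurePreserving (fun z : ℝ × ℝ => (z.1, z.2 - z.1))
      (volume : Measure (ℝ × ℝ)) (volume : Measure (ℝ × ℝ)) := by
    rw [Measure.volume_eq_prod]
    exact measurePreserving_prod_sub volume volume
  have hTemb : MeasurableEmbedding (fun z : ℝ × ℝ => (z.1, z.2 - z.1)) :=
    (MeasurableEquiv.shearSubRight ℝ).measurableEmbedding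
  have hG₁comp : G₁ = h ∘ fun z : ℝ × ℝ => (z.1, z.2 - z.1) := by
    funext p
    simp only [hG₁def, hhdef, Function.comp_apply]
    rw [← hφeven (p.1 - p.2), neg_sub]
  have hG₁int : Integrable G₁ (volume : Measure (ℝ × ℝ)) := by
    rw [hG₁comp]
    exact (hT.integrable_comp_emb hTemb).2 hhint
  have hG₁val : ∫ p : ℝ × ℝ, G₁ p = (2 * N) * ∫ u, φ u := by
    rw [hG₁comp]
    rw [show ((h ∘ fun z : ℝ × ℝ => (z.1, z.2 - z.1)) = fun z : ℝ × ℝ => h (z.1, z.2 - z.1))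
      from rfl]
    rw [hT.integral_comp hTemb h, hhval]
  -- G₂
  set G₂ : ℝ × ℝ → ℝ := fun p => ind p.2 * φ (p.1 - p.2) with hG₂def
  have hG₂comp : G₂ = G₁ ∘ Prod.swap := by
    funext p
    simp only [hG₂def, hG₁def, Function.comp_apply, Prod.fst_swap, Prod.snd_swap]
    rw [← hφeven (p.1 - p.2), neg_sub]
  have hswap : MeasurePreserving (Prod.swap : ℝ × ℝ → ℝ × ℝ)
      (volume : Measure (ℝ × ℝ)) (volume : Measure (ℝ × ℝ)) := by
    rw [Measure.volume_eq_prod]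
    exact Measure.measurePreserving_swap
  have hG₂int : Integrable G₂ (volume : Measure (ℝ × ℝ)) := by
    rw [hG₂comp]
    exact (hswap.integrable_comp_emb MeasurableEquiv.prodComm.measurableEmbedding).2 hG₁int
  have hG₂val : ∫ p : ℝ × ℝ, G₂ p = (2 * N) * ∫ u, φ u := by
    rw [hG₂comp]
    rw [show ((G₁ ∘ Prod.swap) = fun z : ℝ × ℝ => G₁ z.swap) from rfl]
    rw [hswap.integral_comp MeasurableEquiv.prodComm.measurableEmbedding G₁, hG₁val]
  -- pointwise bound
  have lip : ∀ a b : ℝ, |min (|a| / N) 1 - min (|b| / N) 1| ≤ |a - b| / N := by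
    intro a b
    have key : ∀ s t : ℝ, min s 1 - min t 1 ≤ |s - t| := by
      intro s t
      rcases le_total t 1 with h | h
      · rw [min_eq_left h]
        calc min s 1 - t ≤ s - t := by
              have := min_le_left s 1; linarith
          _ ≤ |s - t| := le_abs_self _
      · rw [min_eq_right h]
        have h1 : min s 1 ≤ 1 := min_le_right s 1
        have h2 : (0:ℝ) ≤ |s - t| := abs_nonneg _
        linarith
    have hstep : |min (|a| / N) 1 - min (|b| / N) 1| ≤ |(|a| / N) - (|b| / N)| :=
      abs_sub_le_iff.2 ⟨key _ _, (abs_sub_comm (|a| / N) (|b| / N)) ▸ key (|b| / N) (|a| / N)⟩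
    refine hstep.trans ?_
    rw [div_sub_div_same, abs_div, abs_of_pos hN0]
    exact (div_le_div_iff_of_pos_right hN0).2 (abs_abs_sub_abs_le_abs_sub a b)
  have hKG : ∀ p : ℝ × ℝ,
      (min (|p.1| / N) 1 - min (|p.2| / N) 1) ^ 2 * |p.1 - p.2| ^ (-(1 + α)) ≤
        G₁ p + G₂ p := by
    rintro ⟨x, y⟩
    simp only
    have hminnn : (0:ℝ) ≤ min ((x - y) ^ 2 / N ^ 2) 1 := le_min (by positivity) one_pos.le
    have hsq : (min (|x| / N) 1 - min (|y| / N) 1) ^ 2 ≤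
        (ind x + ind y) * min ((x - y) ^ 2 / N ^ 2) 1 := by
      by_cases hcase : N ≤ |x| ∧ N ≤ |y|
      · have hfx : min (|x| / N) 1 = 1 := min_eq_right ((one_le_div hN0).2 hcase.1)
        have hfy : min (|y| / N) 1 = 1 := min_eq_right ((one_le_div hN0).2 hcase.2)
        rw [hfx, hfy, sub_self]
        have : (0:ℝ) ≤ (ind x + ind y) * min ((x - y) ^ 2 / N ^ 2) 1 :=
          mul_nonneg (by have := hindnonneg x; have := hindnonneg y; linarith) hminnn
        simpa using this
      · have hind1 : (1:ℝ) ≤ ind x + ind y := by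
          rcases not_and_or.1 hcase with hx | hy
          · have hx' : x ∈ Ioo (-N) N := abs_lt.1 (lt_of_not_ge hx)
            have : ind x = 1 := by rw [hinddef]; exact indicator_of_mem hx' _
            have := hindnonneg y; linarith
          · have hy' : y ∈ Ioo (-N) N := abs_lt.1 (lt_of_not_ge hy)
            have : ind y = 1 := by rw [hinddef]; exact indicator_of_mem hy' _
            have := hindnonneg x; linarith
        have hx0 : 0 ≤ min (|x| / N) 1 := le_min (by positivity) one_pos.le
        have hx1 : min (|x| / N) 1 ≤ 1 := min_le_right _ _
        have hy0 : 0 ≤ min (|y| / N) 1 := le_min (by positivity) one_pos.le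
        have hy1 : min (|y| / N) 1 ≤ 1 := min_le_right _ _
        have hle1 : (min (|x| / N) 1 - min (|y| / N) 1) ^ 2 ≤ 1 := by nlinarith
        have hle2 : (min (|x| / N) 1 - min (|y| / N) 1) ^ 2 ≤ (x - y) ^ 2 / N ^ 2 := by
          have h := lip x y
          calc (min (|x| / N) 1 - min (|y| / N) 1) ^ 2
              = |min (|x| / N) 1 - min (|y| / N) 1| ^ 2 := (sq_abs _).symm
            _ ≤ (|x - y| / N) ^ 2 := by
                exact pow_le_pow_left₀ (abs_nonneg _) h 2
            _ = (x - y) ^ 2 / N ^ 2 := by rw [div_pow, sq_abs]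
        calc (min (|x| / N) 1 - min (|y| / N) 1) ^ 2 ≤ min ((x - y) ^ 2 / N ^ 2) 1 :=
              le_min hle2 hle1
          _ = 1 * min ((x - y) ^ 2 / N ^ 2) 1 := (one_mul _).symm
          _ ≤ (ind x + ind y) * min ((x - y) ^ 2 / N ^ 2) 1 :=
              mul_le_mul_of_nonneg_right hind1 hminnn
    calc (min (|x| / N) 1 - min (|y| / N) 1) ^ 2 * |x - y| ^ (-(1 + α))
        ≤ ((ind x + ind y) * min ((x - y) ^ 2 / N ^ 2) 1) * |x - y| ^ (-(1 + α)) :=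
          mul_le_mul_of_nonneg_right hsq (rpow_nonneg (abs_nonneg _) _)
      _ = G₁ (x, y) + G₂ (x, y) := by simp only [hG₁def, hG₂def, hφdef]; ring
  -- measurability of the kernel
  have hrpowm : Measurable fun t : ℝ => t ^ (-(1 + α)) :=
    measurable_of_continuousOn_compl_singleton 0
      (continuousOn_id.rpow_const fun x hx => Or.inl hx)
  have hcont1 : Continuous fun p : ℝ × ℝ => min (|p.1| / N) 1 :=
    (continuous_fst.abs.div_const N).min continuous_const
  have hcont2 : Continuous fun p : ℝ × ℝ => min (|p.2| / N) 1 :=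
    (continuous_snd.abs.div_const N).min continuous_const
  have hKmeas : AEStronglyMeasurable (fun p : ℝ × ℝ =>
      (min (|p.1| / N) 1 - min (|p.2| / N) 1) ^ 2 * |p.1 - p.2| ^ (-(1 + α)))
      (volume : Measure (ℝ × ℝ)) := by
    exact ((((hcont1.sub hcont2).pow 2).measurable).mul
      (hrpowm.comp ((measurable_fst.sub measurable_snd).abs))).aestronglyMeasurable
  have hKnonneg : ∀ p : ℝ × ℝ,
      0 ≤ (min (|p.1| / N) 1 - min (|p.2| / N) 1) ^ 2 * |p.1 - p.2| ^ (-(1 + α)) :=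
    fun p => mul_nonneg (sq_nonneg _) (rpow_nonneg (abs_nonneg _) _)
  have hKint : Integrable (fun p : ℝ × ℝ =>
      (min (|p.1| / N) 1 - min (|p.2| / N) 1) ^ 2 * |p.1 - p.2| ^ (-(1 + α)))
      (volume : Measure (ℝ × ℝ)) := by
    refine Integrable.mono' (hG₁int.add hG₂int) hKmeas (Filter.Eventually.of_forall ?_)
    intro p
    rw [Real.norm_eq_abs, abs_of_nonneg (hKnonneg p)]
    exact hKG p
  refine ⟨hKint, ?_⟩
  calc ∫ p : ℝ × ℝ, (min (|p.1| / N) 1 - min (|p.2| / N) 1) ^ 2 * |p.1 - p.2| ^ (-(1 + α))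
      ≤ ∫ p : ℝ × ℝ, (G₁ p + G₂ p) := integral_mono hKint (hG₁int.add hG₂int) hKG
    _ = (2 * N) * (∫ u, φ u) + (2 * N) * (∫ u, φ u) := by
        rw [integral_add hG₁int hG₂int, hG₁val, hG₂val]
    _ = (4 * N) * ∫ u, φ u := by ring
    _ ≤ (4 * N) * ((2 / (2 - α) + 2 / α) * N ^ (-α)) :=
        mul_le_mul_of_nonneg_left hφval (by positivity)
    _ = (8 / (2 - α) + 8 / α) * N ^ (1 - α) := by
        rw [show (1 - α : ℝ) = 1 + -α by ring, rpow_add hN0, rpow_one]; ring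

lemma mu_upper {γ Cγ N : ℝ} (hγ1 : 1 < γ) (hγ2 : γ < 2) (hCγ : 0 < Cγ) (hN : 1 ≤ N) :
    ∫ x : ℝ, Cγ * (1 + |x|) ^ (-γ) * min (|x| / N) 1 ≤
      2 * Cγ * (1 / (2 - γ) + 1 / (γ - 1)) * N ^ (1 - γ) := by
  have hN0 : (0 : ℝ) < N := lt_of_lt_of_le one_pos hN
  have hrpowm : ∀ c : ℝ, Measurable fun t : ℝ => t ^ c := fun c =>
    measurable_of_continuousOn_compl_singleton 0
      (continuousOn_id.rpow_const fun x hx => Or.inl hx)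
  set Ψ : ℝ → ℝ := fun t => Cγ * (1 + t) ^ (-γ) * min (t / N) 1 with hΨ
  have habs : (fun x : ℝ => Cγ * (1 + |x|) ^ (-γ) * min (|x| / N) 1) = fun x => Ψ |x| := rfl
  have hΨmeas : Measurable Ψ :=
    (measurable_const.mul ((hrpowm (-γ)).comp (measurable_const.add measurable_id))).mul
      ((measurable_id.div_const N).min measurable_const)
  have hΨnonneg : ∀ t ∈ Ioi (0:ℝ), 0 ≤ Ψ t := by
    intro t ht
    have ht0 : (0:ℝ) < t := ht
    exact mul_nonneg (mul_nonneg hCγ.le (rpow_nonneg (by linarith) _))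
      (le_min (by positivity) one_pos.le)
  have hb1 : ∀ t ∈ Ioc (0:ℝ) N, Ψ t ≤ Cγ / N * t ^ (1 - γ) := by
    intro t ht
    have ht0 : (0:ℝ) < t := ht.1
    have hrle : (1 + t) ^ (-γ) ≤ t ^ (-γ) :=
      rpow_le_rpow_of_nonpos ht0 (by linarith) (by linarith)
    calc Ψ t ≤ Cγ * (1 + t) ^ (-γ) * (t / N) :=
          mul_le_mul_of_nonneg_left (min_le_left _ _)
            (mul_nonneg hCγ.le (rpow_nonneg (by linarith) _))
      _ ≤ Cγ * t ^ (-γ) * (t / N) := by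
          have : (0:ℝ) ≤ t / N := by positivity
          exact mul_le_mul_of_nonneg_right (mul_le_mul_of_nonneg_left hrle hCγ.le) this
      _ = Cγ / N * t ^ (1 - γ) := by
          rw [show (1 - γ : ℝ) = -γ + 1 by ring, rpow_add ht0, rpow_one]; ring
  have hm1 : IntegrableOn (fun t : ℝ => Cγ / N * t ^ (1 - γ)) (Ioc 0 N) := by
    have h := (intervalIntegral.intervalIntegrable_rpow'
      (by linarith : (-1:ℝ) < 1 - γ) (a := 0) (b := N))
    rw [intervalIntegrable_iff_integrableOn_Ioc_of_le hN0.le] at h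
    exact h.const_mul _
  have I1 : IntegrableOn Ψ (Ioc 0 N) := by
    refine Integrable.mono' hm1 (hΨmeas.aestronglyMeasurable.restrict) ?_
    refine (ae_restrict_iff' measurableSet_Ioc).2 (Filter.Eventually.of_forall ?_)
    intro t ht
    rw [Real.norm_eq_abs, abs_of_nonneg (hΨnonneg t ht.1)]
    exact hb1 t ht
  have hb2 : ∀ t ∈ Ioi N, Ψ t ≤ Cγ * t ^ (-γ) := by
    intro t ht
    have ht0 : (0:ℝ) < t := hN0.trans ht
    have hrle : (1 + t) ^ (-γ) ≤ t ^ (-γ) :=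
      rpow_le_rpow_of_nonpos ht0 (by linarith) (by linarith)
    calc Ψ t ≤ Cγ * (1 + t) ^ (-γ) * 1 :=
          mul_le_mul_of_nonneg_left (min_le_right _ _)
            (mul_nonneg hCγ.le (rpow_nonneg (by linarith) _))
      _ = Cγ * (1 + t) ^ (-γ) := mul_one _
      _ ≤ Cγ * t ^ (-γ) := mul_le_mul_of_nonneg_left hrle hCγ.le
  have hm2 : IntegrableOn (fun t : ℝ => Cγ * t ^ (-γ)) (Ioi N) :=
    (integrableOn_Ioi_rpow_of_lt (by linarith) hN0).const_mul _
  have I2 : IntegrableOn Ψ (Ioi N) := by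
    refine Integrable.mono' hm2 (hΨmeas.aestronglyMeasurable.restrict) ?_
    refine (ae_restrict_iff' measurableSet_Ioi).2 (Filter.Eventually.of_forall ?_)
    intro t ht
    rw [Real.norm_eq_abs, abs_of_nonneg (hΨnonneg t (lt_trans hN0 ht))]
    exact hb2 t ht
  rw [habs, integral_comp_abs (f := Ψ)]
  have hsplit : ∫ t in Ioi (0:ℝ), Ψ t = (∫ t in Ioc (0:ℝ) N, Ψ t) + ∫ t in Ioi N, Ψ t := by
    rw [← Ioc_union_Ioi_eq_Ioi hN0.le]
    exact setIntegral_union (Ioc_disjoint_Ioi le_rfl) measurableSet_Ioi I1 I2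
  have e1 : ∫ t in Ioc (0:ℝ) N, Ψ t ≤ Cγ * N ^ (1 - γ) / (2 - γ) := by
    have h1 : ∫ t in Ioc (0:ℝ) N, Ψ t ≤ ∫ t in Ioc (0:ℝ) N, Cγ / N * t ^ (1 - γ) :=
      setIntegral_mono_on I1 hm1 measurableSet_Ioc hb1
    refine h1.trans_eq ?_
    have hNN : N ^ (2 - γ) = N * N ^ (1 - γ) := by
      rw [show (2 - γ : ℝ) = 1 + (1 - γ) by ring, rpow_add hN0, rpow_one]
    have h2γ : (2 - γ : ℝ) ≠ 0 := by linarith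
    rw [integral_const_mul, ← intervalIntegral.integral_of_le hN0.le,
      integral_rpow (Or.inl (by linarith : (-1:ℝ) < 1 - γ)),
      show (1 - γ + 1 : ℝ) = 2 - γ by ring, Real.zero_rpow h2γ, sub_zero, hNN]
    field_simp
  have e2 : ∫ t in Ioi N, Ψ t ≤ Cγ * N ^ (1 - γ) / (γ - 1) := by
    have h2 : ∫ t in Ioi N, Ψ t ≤ ∫ t in Ioi N, Cγ * t ^ (-γ) :=
      setIntegral_mono_on I2 hm2 measurableSet_Ioi hb2
    refine h2.trans_eq ?_
    rw [integral_const_mul, integral_Ioi_rpow_of_lt (by linarith) hN0,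
      show (-γ + 1 : ℝ) = 1 - γ by ring]
    rw [show (1 - γ : ℝ) = -(γ - 1) by ring, neg_div_neg_eq, mul_div_assoc]
  calc 2 * ∫ t in Ioi (0:ℝ), Ψ t
      ≤ 2 * (Cγ * N ^ (1 - γ) / (2 - γ) + Cγ * N ^ (1 - γ) / (γ - 1)) := by
        rw [hsplit]; linarith
    _ = 2 * Cγ * (1 / (2 - γ) + 1 / (γ - 1)) * N ^ (1 - γ) := by
        have h2γ : (2 - γ : ℝ) ≠ 0 := by linarith
        have hγ1' : (γ - 1 : ℝ) ≠ 0 := by linarith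
        field_simp


/-- For `α ∈ (1,2)`, `γ ∈ (1,α]` and `μ(dx) = C_γ (1+|x|)^{-γ} dx` a probability
measure on `ℝ`, there is no decreasing function `β : (0,∞) → (0,∞)` such that the
super Poincaré inequality `μ(f²) ≤ r E(f,f) + β(r) μ(|f|)²` holds for all
`r > 0` and all `f` in the form domain (i.e. `f ∈ L²(μ)` with finite `α`-stable
energy). -/
theorem stmt15 (α γ Cγ Cα : ℝ) (hα : α ∈ Set.Ioo (1 : ℝ) 2)
    (hγ : γ ∈ Set.Ioc (1 : ℝ) α) (hCγ : 0 < Cγ) (hCα : 0 < Cα)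
    (μ : Measure ℝ)
    (hμ : μ = volume.withDensity fun x => ENNReal.ofReal (Cγ * (1 + |x|) ^ (-γ)))
    (hprob : IsProbabilityMeasure μ) :
    ¬ ∃ β : ℝ → ℝ, (∀ r > (0 : ℝ), 0 < β r) ∧
      (∀ r s : ℝ, 0 < r → r ≤ s → β s ≤ β r) ∧
      ∀ r > (0 : ℝ), ∀ f : ℝ → ℝ, MemLp f 2 μ →
        Integrable (fun p : ℝ × ℝ => (f p.1 - f p.2) ^ 2 * |p.1 - p.2| ^ (-(1 + α))) →
        ∫ x, f x ^ 2 ∂μ ≤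
          r * ((Cα / 2) * ∫ p : ℝ × ℝ, (f p.1 - f p.2) ^ 2 * |p.1 - p.2| ^ (-(1 + α))) +
            β r * (∫ x, |f x| ∂μ) ^ 2 := by
  obtain ⟨hα1, hα2⟩ := hα
  obtain ⟨hγ1, hγ2⟩ := hγ
  have hγ2' : γ < 2 := lt_of_le_of_lt hγ2 hα2
  haveI := hprob
  rintro ⟨β, hβpos, -, hineq⟩
  set d : ℝ → ℝ := fun x => Cγ * (1 + |x|) ^ (-γ) with hd
  have hd_cont : Continuous d :=
    continuous_const.mul ((continuous_const.add continuous_abs).rpow_const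
      (fun x => Or.inl (add_pos_of_pos_of_nonneg one_pos (abs_nonneg x)).ne'))
  have hd_nonneg : ∀ x, 0 ≤ d x := fun x =>
    mul_nonneg hCγ.le (rpow_nonneg (by positivity) _)
  have hμint : ∀ g : ℝ → ℝ, ∫ x, g x ∂μ = ∫ x, d x * g x := by
    intro g
    rw [hμ]
    rw [show (fun x => ENNReal.ofReal (Cγ * (1 + |x|) ^ (-γ)))
        = (fun x => ((d x).toNNReal : ENNReal)) from rfl]
    rw [integral_withDensity_eq_integral_smul hd_cont.measurable.real_toNNReal g]
    congr 1
    funext x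
    rw [NNReal.smul_def, Real.coe_toNNReal _ (hd_nonneg x), smul_eq_mul]
  have hd_int : Integrable d := by
    refine ⟨hd_cont.aestronglyMeasurable, ?_⟩
    rw [hasFiniteIntegral_iff_ofReal (Filter.Eventually.of_forall hd_nonneg)]
    have : ∫⁻ x, ENNReal.ofReal (d x) = μ univ := by
      rw [hμ, withDensity_apply _ MeasurableSet.univ, setLIntegral_univ]
    rw [this, measure_univ]
    exact ENNReal.one_lt_top
  set A : ℝ := 8 / (2 - α) + 8 / α with hA
  have h2α : (0:ℝ) < 2 - α := by linarith
  have hApos : 0 < A := by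
    have h1 : (0:ℝ) < 8 / (2 - α) := by positivity
    have h2 : (0:ℝ) < 8 / α := by positivity
    rw [hA]; linarith
  set c₃ : ℝ := Cγ * 3 ^ (-γ) with hc₃
  have hc₃pos : 0 < c₃ := mul_pos hCγ (rpow_pos_of_pos (by norm_num) _)
  set c₄ : ℝ := 2 * Cγ * (1 / (2 - γ) + 1 / (γ - 1)) with hc₄
  have key : ∀ r > (0:ℝ), ∀ n : ℕ, 1 ≤ n →
      c₃ ≤ r * (Cα / 2) * A + β r * c₄ ^ 2 * (n : ℝ) ^ (1 - γ) := by
    intro r hr n hn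
    set N : ℝ := (n : ℝ) with hNdef
    have hN1 : 1 ≤ N := by rw [hNdef]; exact_mod_cast hn
    have hN0 : (0:ℝ) < N := lt_of_lt_of_le one_pos hN1
    set f : ℝ → ℝ := fun x => min (|x| / N) 1 with hf
    have hf_cont : Continuous f := (continuous_abs.div_const N).min continuous_const
    have hf_nonneg : ∀ x, 0 ≤ f x := fun x => le_min (by positivity) one_pos.le
    have hf_le_one : ∀ x, f x ≤ 1 := fun x => min_le_right _ _
    have hmem : MemLp f 2 μ :=
      MemLp.of_bound hf_cont.aestronglyMeasurable 1
        (Filter.Eventually.of_forall fun x => by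
          rw [Real.norm_eq_abs, abs_of_nonneg (hf_nonneg x)]; exact hf_le_one x)
    obtain ⟨hEint, hEval⟩ := energy_est (N := N) hα1 hα2 hN1
    have hEint' : Integrable
        (fun p : ℝ × ℝ => (f p.1 - f p.2) ^ 2 * |p.1 - p.2| ^ (-(1 + α))) := hEint
    have hEval' : ∫ p : ℝ × ℝ, (f p.1 - f p.2) ^ 2 * |p.1 - p.2| ^ (-(1 + α)) ≤
        A * N ^ (1 - α) := hEval
    have hmain := hineq r hr f hmem hEint'
    -- lower bound on ∫ f² dμ
    have hfd_int : Integrable (fun x => d x * f x ^ 2) := by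
      refine hd_int.mono' ((hd_cont.mul (hf_cont.pow 2)).aestronglyMeasurable)
        (Filter.Eventually.of_forall fun x => ?_)
      rw [Real.norm_eq_abs, abs_of_nonneg (mul_nonneg (hd_nonneg x) (sq_nonneg _))]
      exact mul_le_of_le_one_right (hd_nonneg x)
        (pow_le_one₀ (hf_nonneg x) (hf_le_one x))
    have hlow : c₃ * N ^ (1 - γ) ≤ ∫ x, f x ^ 2 ∂μ := by
      rw [hμint (fun x => f x ^ 2)]
      have hsub : ∫ x in Ioc N (2 * N), d x * f x ^ 2 ≤ ∫ x, d x * f x ^ 2 :=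
        setIntegral_le_integral hfd_int (Filter.Eventually.of_forall fun x =>
          mul_nonneg (hd_nonneg x) (sq_nonneg _))
      have hconst : ∀ x ∈ Ioc N (2 * N), Cγ * (3 * N) ^ (-γ) ≤ d x * f x ^ 2 := by
        intro x hx
        have hxpos : 0 < x := hN0.trans hx.1
        have hfx : f x = 1 := by
          rw [hf]
          simp only
          rw [min_eq_right ((one_le_div hN0).2 (by rw [abs_of_pos hxpos]; exact hx.1.le))]
        rw [hfx, one_pow, mul_one, hd]
        have h1x : 1 + |x| ≤ 3 * N := by rw [abs_of_pos hxpos]; nlinarith [hx.2]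
        exact mul_le_mul_of_nonneg_left
          (rpow_le_rpow_of_nonpos (by positivity) h1x (by linarith)) hCγ.le
      have hcint : IntegrableOn (fun _ : ℝ => Cγ * (3 * N) ^ (-γ)) (Ioc N (2 * N)) :=
        integrableOn_const measure_Ioc_lt_top.ne
      have hmono : ∫ x in Ioc N (2 * N), Cγ * (3 * N) ^ (-γ) ≤
          ∫ x in Ioc N (2 * N), d x * f x ^ 2 :=
        setIntegral_mono_on hcint hfd_int.integrableOn measurableSet_Ioc hconst
      have hval : ∫ _x in Ioc N (2 * N), (Cγ * (3 * N) ^ (-γ) : ℝ) = c₃ * N ^ (1 - γ) := by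
        rw [setIntegral_const, Real.volume_real_Ioc_of_le (by linarith), smul_eq_mul,
          show (2 * N - N : ℝ) = N by ring,
          Real.mul_rpow (by norm_num) hN0.le, hc₃,
          show (1 - γ : ℝ) = -γ + 1 by ring, rpow_add hN0, rpow_one]
        ring
      linarith
    -- upper bound on ∫ |f| dμ
    have hup : ∫ x, |f x| ∂μ ≤ c₄ * N ^ (1 - γ) := by
      rw [hμint (fun x => |f x|)]
      have heq : (fun x => d x * |f x|)
          = fun x : ℝ => Cγ * (1 + |x|) ^ (-γ) * min (|x| / N) 1 := by
        funext x
        rw [abs_of_nonneg (hf_nonneg x)]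
      rw [heq]
      exact mu_upper hγ1 hγ2' hCγ hN1
    have habs0 : (0:ℝ) ≤ ∫ x, |f x| ∂μ := integral_nonneg fun x => abs_nonneg _
    have hsq : (∫ x, |f x| ∂μ) ^ 2 ≤ (c₄ * N ^ (1 - γ)) ^ 2 :=
      pow_le_pow_left₀ habs0 hup 2
    set P : ℝ := N ^ (1 - γ) with hP
    have hPpos : 0 < P := rpow_pos_of_pos hN0 _
    have hNexp : N ^ (1 - α) ≤ P := rpow_le_rpow_of_exponent_le hN1 (by linarith)
    have hstep1 : r * ((Cα / 2) * ∫ p : ℝ × ℝ,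
        (f p.1 - f p.2) ^ 2 * |p.1 - p.2| ^ (-(1 + α))) ≤ r * (Cα / 2) * (A * P) := by
      have h1 : r * (Cα / 2) * (∫ p : ℝ × ℝ,
          (f p.1 - f p.2) ^ 2 * |p.1 - p.2| ^ (-(1 + α))) ≤ r * (Cα / 2) * (A * N ^ (1 - α)) :=
        mul_le_mul_of_nonneg_left hEval' (by positivity)
      have h2 : r * (Cα / 2) * (A * N ^ (1 - α)) ≤ r * (Cα / 2) * (A * P) :=
        mul_le_mul_of_nonneg_left (mul_le_mul_of_nonneg_left hNexp hApos.le) (by positivity)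
      calc r * ((Cα / 2) * ∫ p : ℝ × ℝ,
            (f p.1 - f p.2) ^ 2 * |p.1 - p.2| ^ (-(1 + α)))
          = r * (Cα / 2) * (∫ p : ℝ × ℝ,
            (f p.1 - f p.2) ^ 2 * |p.1 - p.2| ^ (-(1 + α))) := by ring
        _ ≤ r * (Cα / 2) * (A * P) := h1.trans h2
    have hstep2 : β r * (∫ x, |f x| ∂μ) ^ 2 ≤ β r * (c₄ * P) ^ 2 :=
      mul_le_mul_of_nonneg_left hsq (hβpos r hr).le
    have hfinal : c₃ * P ≤ (r * (Cα / 2) * A + β r * c₄ ^ 2 * P) * P := by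
      have := hlow.trans (hmain.trans (add_le_add hstep1 hstep2))
      nlinarith [this]
    exact le_of_mul_le_mul_right hfinal hPpos
  -- conclude
  set r₀ : ℝ := c₃ / (Cα * A) with hr₀
  have hr₀pos : 0 < r₀ := div_pos hc₃pos (mul_pos hCα hApos)
  have hhalf : r₀ * (Cα / 2) * A = c₃ / 2 := by
    rw [hr₀]
    field_simp
  have t1 : Filter.Tendsto (fun x : ℝ => x ^ (1 - γ)) Filter.atTop (nhds 0) := by
    rw [show (1 - γ : ℝ) = -(γ - 1) by ring]
    exact tendsto_rpow_neg_atTop (by linarith)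
  have t2 : Filter.Tendsto (fun n : ℕ => β r₀ * c₄ ^ 2 * (n : ℝ) ^ (1 - γ))
      Filter.atTop (nhds (β r₀ * c₄ ^ 2 * 0)) :=
    (t1.comp tendsto_natCast_atTop_atTop).const_mul _
  rw [mul_zero] at t2
  have hev : ∀ᶠ n : ℕ in Filter.atTop, β r₀ * c₄ ^ 2 * (n : ℝ) ^ (1 - γ) < c₃ / 2 :=
    t2.eventually (gt_mem_nhds (half_pos hc₃pos))
  obtain ⟨n, hn1, hn2⟩ := ((Filter.eventually_ge_atTop 1).and hev).exists
  have hk := key r₀ hr₀pos n hn1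
  rw [hhalf] at hk
  linarith
end
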